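/- arXiv:2511.05917 — 5 statements merged into one kernel-verified Lean document; each statement's English description precedes it below -/
import Mathlib

section
/- Let G = {g_1 < ... < g_r} and H = {h_1 < ... < h_s} be nonempty subsets of [n]. If there exists ℓ with 1 ≤ ℓ ≤ n such that |G ∩ [ℓ]| + |H ∩ [ℓ]| > ℓ, then there exist indices p ∈ [r] and q ∈ [s] such that g_p = h_q = p + q − 1. -/
def nth (A : Finset ℕ) (i : ℕ) : ℕ := (Finset.sort A (· ≤ ·)).getD i 0

lemma sorted_filter_lt (l : List ℕ) (hl : l.Pairwise (· < ·)) (k : ℕ) (hk : k < l.length) :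
    (l.filter (fun x => x < l.get ⟨k, hk⟩)).length = k := by
  induction l generalizing k with
  | nil => simp at hk
  | cons b t ih =>
    rcases List.pairwise_cons.mp hl with ⟨hb, ht⟩
    cases k with
    | zero =>
      simp only [List.get]
      rw [List.filter_cons_of_neg (by simp), List.length_eq_zero_iff, List.filter_eq_nil_iff]
      intro x hx
      simpa using (hb x hx).not_gt
    | succ k =>
      have hk' : k < t.length := by simpa using hk
      have hmem : t.get ⟨k, hk'⟩ ∈ t := List.get_mem t ⟨k, hk'⟩
      have hblt : b < t.get ⟨k, hk'⟩ := hb _ hmem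
      simp only [List.get]
      rw [List.filter_cons_of_pos (by simpa using hblt)]
      simpa using ih ht k hk'

lemma filter_len (A : Finset ℕ) (a : ℕ) :
    ((Finset.sort A (· ≤ ·)).filter (fun x => x < a)).length = (A.filter (· < a)).card := by
  rw [← Multiset.coe_card, ← Multiset.filter_coe, Finset.sort_eq]
  rfl

lemma nth_rank (A : Finset ℕ) {a : ℕ} (ha : a ∈ A) :
    (A.filter (· < a)).card < A.card ∧ nth A ((A.filter (· < a)).card) = a := by
  have hmem : a ∈ Finset.sort A (· ≤ ·) := (Finset.mem_sort _).2 ha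
  obtain ⟨⟨k, hk⟩, hget⟩ := List.mem_iff_get.mp hmem
  have hlen := sorted_filter_lt _ (Finset.sortedLT_sort A).pairwise k hk
  rw [hget, filter_len] at hlen
  constructor
  · rw [hlen]; simpa [Finset.length_sort] using hk
  · rw [hlen, nth, List.getD_eq_getElem _ _ (by simpa using hk)]
    simpa [List.get_eq_getElem] using hget

lemma inter_step (A : Finset ℕ) (m : ℕ) :
    A ∩ Finset.Icc 1 (m + 1) =
      if m + 1 ∈ A then insert (m + 1) (A ∩ Finset.Icc 1 m) else A ∩ Finset.Icc 1 m := by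
  split_ifs with hm <;> ext x <;>
    simp only [Finset.mem_inter, Finset.mem_Icc, Finset.mem_insert] <;>
    constructor <;> intro hx
  · rcases eq_or_ne x (m+1) with rfl | hne
    · left; rfl
    · right; exact ⟨hx.1, hx.2.1, by omega⟩
  · rcases hx with rfl | hx
    · exact ⟨hm, by omega⟩
    · exact ⟨hx.1, hx.2.1, by omega⟩
  · refine ⟨hx.1, hx.2.1, ?_⟩
    rcases Nat.lt_or_ge x (m+1) with h | h
    · omega
    · exfalso; have : x = m + 1 := by omega
      exact hm (this ▸ hx.1)
  · exact ⟨hx.1, hx.2.1, by omega⟩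

/-- If μ_G(ℓ) + μ_H(ℓ) > ℓ for some 1 ≤ ℓ ≤ n, then g_p = h_q = p + q - 1
for some 1-based indices p, q (here 0-based: nth G p = nth H q = p + q + 1). -/
theorem stmt_3 (n : ℕ) (G H : Finset ℕ)
    (hG : G ⊆ Finset.Icc 1 n) (hH : H ⊆ Finset.Icc 1 n)
    (hGne : G.Nonempty) (hHne : H.Nonempty)
    (h : ∃ ℓ, 1 ≤ ℓ ∧ ℓ ≤ n ∧
      ℓ < (G ∩ Finset.Icc 1 ℓ).card + (H ∩ Finset.Icc 1 ℓ).card) :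
    ∃ p < G.card, ∃ q < H.card, nth G p = nth H q ∧ nth G p = p + q + 1 := by
  classical
  obtain ⟨ℓ0, -, -, h3⟩ := h
  have hP : ∃ ℓ, ℓ < (G ∩ Finset.Icc 1 ℓ).card + (H ∩ Finset.Icc 1 ℓ).card := ⟨ℓ0, h3⟩
  set ℓ := Nat.find hP with hℓdef
  have hℓ : ℓ < (G ∩ Finset.Icc 1 ℓ).card + (H ∩ Finset.Icc 1 ℓ).card := Nat.find_spec hP
  have hℓ0 : ℓ ≠ 0 := by
    intro h0
    rw [h0] at hℓ
    simp at hℓ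
  obtain ⟨m, hm⟩ : ∃ m, ℓ = m + 1 := ⟨ℓ - 1, by omega⟩
  have hmin : ¬ (m < (G ∩ Finset.Icc 1 m).card + (H ∩ Finset.Icc 1 m).card) :=
    Nat.find_min hP (by omega)
  push_neg at hmin
  rw [hm] at hℓ
  -- m+1 ∈ G
  have hcard_le : ∀ A : Finset ℕ, (A ∩ Finset.Icc 1 (m+1)).card ≤ (A ∩ Finset.Icc 1 m).card + 1 := by
    intro A
    rw [inter_step]
    split_ifs
    · exact (Finset.card_insert_le _ _)
    · omega
  have hcard_eq : ∀ A : Finset ℕ, m + 1 ∉ A → (A ∩ Finset.Icc 1 (m+1)).card = (A ∩ Finset.Icc 1 m).card := by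
    intro A hA
    rw [inter_step, if_neg hA]
  have hmG : m + 1 ∈ G := by
    by_contra hc
    have := hcard_eq G hc
    have := hcard_le H
    omega
  have hmH : m + 1 ∈ H := by
    by_contra hc
    have := hcard_eq H hc
    have := hcard_le G
    omega
  have hGsucc : (G ∩ Finset.Icc 1 (m+1)).card = (G ∩ Finset.Icc 1 m).card + 1 := by
    rw [inter_step, if_pos hmG, Finset.card_insert_of_notMem (by simp)]
  have hHsucc : (H ∩ Finset.Icc 1 (m+1)).card = (H ∩ Finset.Icc 1 m).card + 1 := by
    rw [inter_step, if_pos hmH, Finset.card_insert_of_notMem (by simp)]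
  have hfiltG : G.filter (· < m + 1) = G ∩ Finset.Icc 1 m := by
    ext x
    simp only [Finset.mem_filter, Finset.mem_inter, Finset.mem_Icc]
    constructor
    · intro ⟨hx1, hx2⟩
      have := hG hx1
      simp only [Finset.mem_Icc] at this
      exact ⟨hx1, this.1, by omega⟩
    · intro ⟨hx1, hx2⟩
      exact ⟨hx1, by omega⟩
  have hfiltH : H.filter (· < m + 1) = H ∩ Finset.Icc 1 m := by
    ext x
    simp only [Finset.mem_filter, Finset.mem_inter, Finset.mem_Icc]
    constructor
    · intro ⟨hx1, hx2⟩
      have := hH hx1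
      simp only [Finset.mem_Icc] at this
      exact ⟨hx1, this.1, by omega⟩
    · intro ⟨hx1, hx2⟩
      exact ⟨hx1, by omega⟩
  obtain ⟨hpG, hnG⟩ := nth_rank G hmG
  obtain ⟨hqH, hnH⟩ := nth_rank H hmH
  rw [hfiltG] at hpG hnG
  rw [hfiltH] at hqH hnH
  refine ⟨(G ∩ Finset.Icc 1 m).card, hpG, (H ∩ Finset.Icc 1 m).card, hqH, ?_, ?_⟩
  · rw [hnG, hnH]
  · rw [hnG]; omega
end

section
/- Let G = {g_1 < ... < g_r} ⊆ [n]. If there exists ℓ with 1 ≤ ℓ ≤ n such that 2·|G ∩ [ℓ]| > ℓ, then there exists an index p with 1 ≤ p ≤ r such that g_p = 2p − 1. -/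
lemma nth_eq_get (G : Finset ℕ) {p : ℕ} (hp : p < G.card) :
    nth G p = (Finset.sort G (· ≤ ·)).get ⟨p, by rwa [Finset.length_sort]⟩ := by
  have hlen : p < (Finset.sort G (· ≤ ·)).length := by rwa [Finset.length_sort]
  rw [nth, List.getD_eq_getElem _ _ hlen]
  rfl

lemma nth_mem (G : Finset ℕ) {p : ℕ} (hp : p < G.card) : nth G p ∈ G := by
  rw [nth_eq_get G hp]
  exact (Finset.mem_sort _).1 (List.get_mem _ _)

lemma nth_lt_nth (G : Finset ℕ) {p q : ℕ} (hpq : p < q) (hq : q < G.card) :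
    nth G p < nth G q := by
  rw [nth_eq_get G (hpq.trans hq), nth_eq_get G hq]
  exact (Finset.sortedLT_sort G).strictMono_get (by simpa using hpq)

/-- If 2·μ_G(ℓ) > ℓ for some 1 ≤ ℓ ≤ n, then g_p = 2p - 1 for some 1-based index p
(0-based: nth G p = 2p + 1). -/
theorem stmt_4 (n : ℕ) (G : Finset ℕ)
    (hG : G ⊆ Finset.Icc 1 n) (hGne : G.Nonempty)
    (h : ∃ ℓ, 1 ≤ ℓ ∧ ℓ ≤ n ∧ ℓ < 2 * (G ∩ Finset.Icc 1 ℓ).card) :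
    ∃ p < G.card, nth G p = 2 * p + 1 := by
  by_contra hcon
  push_neg at hcon
  -- every nth G p is at least 2p+2
  have key : ∀ p, p < G.card → 2 * p + 2 ≤ nth G p := by
    intro p
    induction p with
    | zero =>
      intro hp
      have h1 : 1 ≤ nth G 0 := (Finset.mem_Icc.1 (hG (nth_mem G hp))).1
      have h2 := hcon 0 hp
      omega
    | succ q ih =>
      intro hp
      have hq : q < G.card := Nat.lt_of_succ_lt hp
      have h1 := ih hq
      have h2 := nth_lt_nth G (by omega : q < q + 1) hp
      have h3 := hcon (q + 1) hp
      omega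
  obtain ⟨ℓ, hℓ1, hℓn, hℓ⟩ := h
  set k := (G ∩ Finset.Icc 1 ℓ).card with hk
  have hk1 : 1 ≤ k := by omega
  have hkcard : k ≤ G.card := Finset.card_le_card Finset.inter_subset_left
  have hklt : k - 1 < G.card := by omega
  -- claim: nth G (k-1) ≤ ℓ
  have hle : nth G (k - 1) ≤ ℓ := by
    by_contra hgt
    push_neg at hgt
    -- map each element of G ∩ Icc 1 ℓ to its index in the sorted list; lands in range (k-1)
    have hcard : k ≤ k - 1 := by
      rw [hk]
      have := Finset.card_le_card_of_injOn
        (fun x => List.idxOf x (Finset.sort G (· ≤ ·)))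
        (s := G ∩ Finset.Icc 1 ℓ) (t := Finset.range (k - 1))
        ?_ ?_
      · simpa using this
      · intro x hx
        have hxG : x ∈ G := Finset.mem_inter.1 hx |>.1
        have hxl : x ≤ ℓ := (Finset.mem_Icc.1 (Finset.mem_inter.1 hx |>.2)).2
        have hxmem : x ∈ Finset.sort G (· ≤ ·) := (Finset.mem_sort _).2 hxG
        have hidx : List.idxOf x (Finset.sort G (· ≤ ·)) < (Finset.sort G (· ≤ ·)).length :=
          List.idxOf_lt_length_iff.2 hxmem
        have hgetx : (Finset.sort G (· ≤ ·))[List.idxOf x (Finset.sort G (· ≤ ·))] = x :=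
          List.getElem_idxOf hidx
        simp only [Finset.mem_coe, Finset.mem_range]
        by_contra! hge
        have hidx' : List.idxOf x (Finset.sort G (· ≤ ·)) < G.card := by
          rwa [Finset.length_sort] at hidx
        -- nth G (k-1) ≤ nth G (indexOf x) = x ≤ ℓ, contradiction
        have : nth G (k - 1) ≤ x := by
          rcases Nat.eq_or_lt_of_le hge with heq | hlt
          · rw [nth_eq_get G hklt]
            have : (⟨k - 1, by rwa [Finset.length_sort]⟩ :
                Fin (Finset.sort G (· ≤ ·)).length) = ⟨_, hidx⟩ := by
              simp [← heq]
            rw [this]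
            simp [hgetx]
          · have := nth_lt_nth G hlt hidx'
            have hx2 : nth G (List.idxOf x (Finset.sort G (· ≤ ·))) = x := by
              rw [nth_eq_get G hidx']
              simpa using hgetx
            omega
        omega
      · intro x hx y hy hxy
        have hxmem : x ∈ Finset.sort G (· ≤ ·) :=
          (Finset.mem_sort _).2 (Finset.mem_inter.1 hx |>.1)
        have hymem : y ∈ Finset.sort G (· ≤ ·) :=
          (Finset.mem_sort _).2 (Finset.mem_inter.1 hy |>.1)
        have hix := List.getElem_idxOf (List.idxOf_lt_length_iff.2 hxmem)
        have hiy := List.getElem_idxOf (List.idxOf_lt_length_iff.2 hymem)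
        simp only at hxy
        rw [← hix, ← hiy]
        simp only [hxy]
    omega
  have := key (k - 1) hklt
  omega
end

section
/- Let k ≥ 2, let G = {g_1 < ... < g_r} ⊆ [n] with g_1 ≥ 2, and fix i ∈ [r]. Let G_i = {1} ∪ {i+1, i+2, ..., g_i}. Suppose S = {s_1 < ... < s_k} ⊆ [n] satisfies s_1 ≥ 2 and s_i ≥ g_i + 1. Then for every ℓ with 1 ≤ ℓ ≤ n, |S ∩ [ℓ]| + |G_i ∩ [ℓ]| ≤ ℓ. -/
lemma nth_mem_s5 {A : Finset ℕ} {j : ℕ} (hj : j < A.card) : nth A j ∈ A := by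
  have h : j < (Finset.sort A (· ≤ ·)).length := by rwa [Finset.length_sort]
  rw [nth, List.getD_eq_getElem _ _ h]
  exact (Finset.mem_sort _).1 (List.getElem_mem h)

lemma nth_lt_nth_s5 {A : Finset ℕ} {j m : ℕ} (hjm : j < m) (hm : m < A.card) :
    nth A j < nth A m := by
  have hm' : m < (Finset.sort A (· ≤ ·)).length := by rwa [Finset.length_sort]
  have hj' : j < (Finset.sort A (· ≤ ·)).length := lt_trans (by omega) hm'
  rw [nth, nth, List.getD_eq_getElem _ _ hj', List.getD_eq_getElem _ _ hm']
  exact Finset.sortedLT_sort A (show (⟨j, hj'⟩ : Fin _) < ⟨m, hm'⟩ from hjm)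

lemma nth_zero_le {A : Finset ℕ} {x : ℕ} (hx : x ∈ A) : nth A 0 ≤ x := by
  have hx' : x ∈ Finset.sort A (· ≤ ·) := (Finset.mem_sort _).2 hx
  have h0 : 0 < (Finset.sort A (· ≤ ·)).length :=
    List.length_pos_iff.2 (List.ne_nil_of_mem hx')
  obtain ⟨m, hm, rfl⟩ := List.getElem_of_mem hx'
  rw [nth, List.getD_eq_getElem _ _ h0]
  exact List.Pairwise.rel_get_of_le (Finset.pairwise_sort A (· ≤ ·)) (by simp)

/-- if ℓ < nth S j then at most j elements of S are ≤ ℓ -/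
lemma count_le_of_lt_nth {S : Finset ℕ} {j ℓ : ℕ} (hj : j < S.card) (h : ℓ < nth S j) :
    (S.filter (· ≤ ℓ)).card ≤ j := by
  classical
  have key : ∀ x ∈ S.filter (· ≤ ℓ), x < nth S j := by
    intro x hx
    simp only [Finset.mem_filter] at hx
    omega
  have hcard := Finset.card_le_card_of_injOn
    (s := S.filter (· ≤ ℓ)) (fun x => (Finset.sort S (· ≤ ·)).idxOf x) (t := Finset.range j) ?_ ?_
  · simpa using hcard
  · intro x hx
    simp only [Finset.mem_coe, Finset.mem_range]
    have hxS' : x ∈ Finset.sort S (· ≤ ·) := (Finset.mem_sort _).2 (Finset.mem_filter.1 hx).1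
    by_contra hc
    push_neg at hc
    have hidx : (Finset.sort S (· ≤ ·)).idxOf x < (Finset.sort S (· ≤ ·)).length :=
      List.idxOf_lt_length_iff.2 hxS'
    have hj' : j < (Finset.sort S (· ≤ ·)).length := by rwa [Finset.length_sort]
    have hle : nth S j ≤ (Finset.sort S (· ≤ ·))[(Finset.sort S (· ≤ ·)).idxOf x] := by
      rw [nth, List.getD_eq_getElem _ _ hj']
      exact List.Pairwise.rel_get_of_le (Finset.pairwise_sort S (· ≤ ·)) (by simpa using hc)
    rw [List.getElem_idxOf] at hle
    exact absurd (key x hx) (by omega)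
  · intro a ha b hb hab
    have ha' : a ∈ Finset.sort S (· ≤ ·) := (Finset.mem_sort _).2 (Finset.mem_filter.1 ha).1
    have hb' : b ∈ Finset.sort S (· ≤ ·) := (Finset.mem_sort _).2 (Finset.mem_filter.1 hb).1
    exact (List.idxOf_inj ha').1 hab

/-- If g_1 ≥ 2, i ∈ [r] (0-based index i here), S is a k-set with s_1 ≥ 2 and
s_i ≥ g_i + 1, then S and G_i = {1} ∪ [i+1, g_i] are not strongly intersecting:
μ_S(ℓ) + μ_{G_i}(ℓ) ≤ ℓ for all 1 ≤ ℓ ≤ n. -/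
theorem stmt_5 (n k : ℕ) (hk : 2 ≤ k) (G S : Finset ℕ)
    (hG : G ⊆ Finset.Icc 1 n) (hS : S ⊆ Finset.Icc 1 n)
    (hGne : G.Nonempty) (hg1 : 2 ≤ nth G 0)
    (i : ℕ) (hi : i < G.card) (hik : i < k)
    (hScard : S.card = k) (hs1 : 2 ≤ nth S 0)
    (hsi : nth G i + 1 ≤ nth S i) :
    ∀ ℓ, 1 ≤ ℓ → ℓ ≤ n →
      (S ∩ Finset.Icc 1 ℓ).card
        + ((insert 1 (Finset.Icc (i + 2) (nth G i))) ∩ Finset.Icc 1 ℓ).card ≤ ℓ := by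
  intro ℓ hℓ1 hℓn
  set g := nth G i with hg
  have hSk : i < S.card := by omega
  have hgi2 : i + 2 ≤ g := by
    have hmono : ∀ j, j < G.card → nth G 0 + j ≤ nth G j := by
      intro j
      induction j with
      | zero => intro _; omega
      | succ m ih =>
        intro hm
        have h1 : nth G m < nth G (m + 1) := nth_lt_nth_s5 (by omega) hm
        have h2 := ih (by omega)
        omega
    have := hmono i hi
    omega
  have h1S : ∀ x ∈ S, 2 ≤ x := fun x hx => le_trans hs1 (nth_zero_le hx)
  have hsecond : ((insert 1 (Finset.Icc (i + 2) g)) ∩ Finset.Icc 1 ℓ).card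
      = (min g ℓ + 1 - (i + 2)) + 1 := by
    rw [Finset.insert_inter_of_mem (by simp only [Finset.mem_Icc]; omega),
      Finset.card_insert_of_notMem (by
        simp only [Finset.mem_inter, Finset.mem_Icc]; omega),
      show Finset.Icc (i + 2) g ∩ Finset.Icc 1 ℓ = Finset.Icc (i + 2) (min g ℓ) by
        ext x; simp only [Finset.mem_inter, Finset.mem_Icc]; omega,
      Nat.card_Icc]
  have hb1 : (S ∩ Finset.Icc 1 ℓ).card ≤ ℓ - 1 := by
    have hsub : S ∩ Finset.Icc 1 ℓ ⊆ Finset.Icc 2 ℓ := by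
      intro x hx
      simp only [Finset.mem_inter, Finset.mem_Icc] at hx ⊢
      exact ⟨h1S x hx.1, hx.2.2⟩
    calc (S ∩ Finset.Icc 1 ℓ).card ≤ (Finset.Icc 2 ℓ).card := Finset.card_le_card hsub
    _ = ℓ - 1 := by rw [Nat.card_Icc]; omega
  have hb2 : ℓ < nth S i → (S ∩ Finset.Icc 1 ℓ).card ≤ i := by
    intro hℓ
    refine le_trans (Finset.card_le_card ?_) (count_le_of_lt_nth hSk hℓ)
    intro x hx
    simp only [Finset.mem_inter, Finset.mem_Icc] at hx
    simp only [Finset.mem_filter]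
    exact ⟨hx.1, hx.2.2⟩
  have hb3 : (S ∩ Finset.Icc 1 ℓ).card ≤ i + (ℓ - g) := by
    classical
    have hsub : S ∩ Finset.Icc 1 ℓ ⊆ (S.filter (· ≤ g)) ∪ Finset.Icc (g + 1) ℓ := by
      intro x hx
      simp only [Finset.mem_inter, Finset.mem_Icc] at hx
      simp only [Finset.mem_union, Finset.mem_filter, Finset.mem_Icc]
      rcases le_or_gt x g with h | h
      · exact Or.inl ⟨hx.1, h⟩
      · exact Or.inr ⟨h, hx.2.2⟩
    calc (S ∩ Finset.Icc 1 ℓ).card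
        ≤ ((S.filter (· ≤ g)) ∪ Finset.Icc (g + 1) ℓ).card := Finset.card_le_card hsub
      _ ≤ (S.filter (· ≤ g)).card + (Finset.Icc (g + 1) ℓ).card := Finset.card_union_le _ _
      _ ≤ i + (ℓ - g) := by
          have := count_le_of_lt_nth hSk (show g < nth S i by omega)
          rw [Nat.card_Icc]
          omega
  rcases le_or_gt ℓ g with hc | hc
  · have := hb2 (by omega)
    omega
  · omega
end

section
/- For positive integers a ≤ b, the number of sets S = {s_1 < ... < s_{b−a+1}} of positive integers satisfying s_j ≤ a + j − 1 for all j (i.e., S ≤ {a, a+1, ..., b} coordinatewise) equals the binomial coefficient C(b, a−1). -/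
lemma sorted_add_le (l : List ℕ) (h : l.Pairwise (· < ·)) :
    ∀ d i (hj : i + d < l.length), l.get ⟨i, by omega⟩ + d ≤ l.get ⟨i + d, hj⟩ := by
  intro d
  induction d with
  | zero => simp
  | succ d ih =>
    intro i hj
    have h1 := ih i (by omega)
    have h2 : l.get ⟨i + d, by omega⟩ < l.get ⟨i + d + 1, by omega⟩ :=
      h.sortedLT.strictMono_get (by simp [Fin.lt_def])
    have : i + (d + 1) = i + d + 1 := by omega
    simp only [this]
    omega

/-- The number of sets S of positive integers with |S| = b - a + 1 and
s_j ≤ a + j - 1 (1-based; i.e. nth S j ≤ a + j 0-based) equals C(b, a-1).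
All such sets are subsets of [b]. -/
theorem stmt_8 (a b : ℕ) (ha : 1 ≤ a) (hab : a ≤ b) :
    ((Finset.Icc 1 b).powerset.filter
      (fun S => S.card = b - a + 1 ∧ ∀ j < b - a + 1, nth S j ≤ a + j)).card
      = Nat.choose b (a - 1) := by
  have key : ∀ S ∈ (Finset.Icc 1 b).powerset,
      (S.card = b - a + 1 ∧ ∀ j < b - a + 1, nth S j ≤ a + j) ↔ S.card = b - a + 1 := by
    intro S hS
    rw [Finset.mem_powerset] at hS
    constructor
    · exact fun h => h.1
    · intro hcard
      refine ⟨hcard, fun j hj => ?_⟩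
      set l := Finset.sort S (· ≤ ·) with hl
      have hlen : l.length = b - a + 1 := by rw [hl, Finset.length_sort, hcard]
      have hjl : j < l.length := by omega
      have hsort : l.Pairwise (· < ·) := S.sortedLT_sort.pairwise
      have hd : j + (b - a - j) < l.length := by omega
      have h1 := sorted_add_le l hsort (b - a - j) j hd
      have hlast : l.get ⟨j + (b - a - j), hd⟩ ∈ S :=
        (Finset.mem_sort _).mp (List.get_mem l ⟨_, hd⟩)
      have hle : l.get ⟨j + (b - a - j), hd⟩ ≤ b := (Finset.mem_Icc.mp (hS hlast)).2
      have : nth S j = l.get ⟨j, hjl⟩ := List.getD_eq_getElem l 0 hjl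
      omega
  rw [Finset.filter_congr key, ← Finset.powersetCard_eq_filter,
    Finset.card_powersetCard, Nat.card_Icc]
  have h1 : b + 1 - 1 = b := by omega
  have h2 : b - a + 1 = b - (a - 1) := by omega
  rw [h1, h2, Nat.choose_symm (by omega)]
end

section
/- Let n ≥ 2k ≥ 4 and 2 ≤ b ≤ k+1. The number of k-subsets S = {s_1 < ... < s_k} of [n] satisfying s_j ≤ j + 1 for all j ≤ b − 1 (i.e., S ⪯ [2,b], meaning the first b−1 elements of S are dominated coordinatewise by {2,3,...,b}) equals b·C(n−b, k−b+1) + C(n−b, k−b). -/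
lemma sorted_gap (l : List ℕ) (hl : l.Pairwise (· < ·)) :
    ∀ d i, i + d < l.length → l.getD i 0 + d ≤ l.getD (i + d) 0 := by
  intro d
  induction d with
  | zero => simp
  | succ d ih =>
    intro i h
    have h1 : i + d < l.length := by omega
    have h2 := ih i h1
    have h3 : l.get ⟨i + d, h1⟩ < l.get ⟨i + d + 1, by omega⟩ :=
      hl.rel_get_of_lt (by simp)
    rw [List.getD_eq_getElem _ _ h1] at h2
    rw [show i + (d+1) = i + d + 1 by omega, List.getD_eq_getElem l 0 (show i+d+1 < l.length by omega)]
    simp only [List.get_eq_getElem] at h3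
    omega

lemma nth_gap (S : Finset ℕ) (i j : ℕ) (hij : i ≤ j) (hj : j < S.card) :
    nth S i + (j - i) ≤ nth S j := by
  have := sorted_gap (Finset.sort S (· ≤ ·)) (Finset.sortedLT_sort S).pairwise (j - i) i
    (by rw [Finset.length_sort]; omega)
  rw [show i + (j - i) = j by omega] at this
  exact this

lemma nth_mem_s12 (S : Finset ℕ) (i : ℕ) (h : i < S.card) : nth S i ∈ S := by
  have h' : i < (Finset.sort S (· ≤ ·)).length := by rwa [Finset.length_sort]
  rw [nth, List.getD_eq_getElem _ _ h']
  exact (Finset.mem_sort _).1 (List.getElem_mem _)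

lemma nth_strictmono (S : Finset ℕ) {i j : ℕ} (hij : i < j) (hj : j < S.card) :
    nth S i < nth S j := by
  have := nth_gap S i j (le_of_lt hij) hj
  omega

lemma cond_iff (n k b : ℕ) (S : Finset ℕ) (hS : S ⊆ Finset.Icc 1 n)
    (hcard : S.card = k) (hb : 2 ≤ b) (hbk : b - 1 ≤ k) :
    (∀ j < b - 1, nth S j ≤ j + 2) ↔ b - 1 ≤ (S ∩ Finset.Icc 1 b).card := by
  constructor
  · intro H
    have key : ∀ i < b - 1, nth S i ∈ S ∩ Finset.Icc 1 b := by
      intro i hi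
      have hmem : nth S i ∈ S := nth_mem_s12 S i (by omega)
      have h1 : 1 ≤ nth S i := (Finset.mem_Icc.1 (hS hmem)).1
      have h2 : nth S i ≤ b := by have := H i hi; omega
      exact Finset.mem_inter.2 ⟨hmem, Finset.mem_Icc.2 ⟨h1, h2⟩⟩
    calc b - 1 = (Finset.range (b-1)).card := (Finset.card_range _).symm
      _ ≤ (S ∩ Finset.Icc 1 b).card := by
          apply Finset.card_le_card_of_injOn (fun i => nth S i)
          · intro i hi; exact key i (Finset.mem_range.1 hi)
          · intro i hi j hj hij
            simp only [Finset.coe_range, Set.mem_Iio] at hi hj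
            by_contra hne
            rcases Nat.lt_or_ge i j with h | h
            · exact absurd hij (Nat.ne_of_lt (nth_strictmono S h (by omega)))
            · have : j < i := by omega
              exact absurd hij.symm (Nat.ne_of_lt (nth_strictmono S this (by omega)))
  · intro H j hj
    have hkey : nth S (b - 2) ≤ b := by
      by_contra hlt
      push_neg at hlt
      set l := Finset.sort S (· ≤ ·) with hl
      have hlen : l.length = k := by rw [hl, Finset.length_sort, hcard]
      have : (S ∩ Finset.Icc 1 b).card ≤ (Finset.range (b-2)).card := by
        apply Finset.card_le_card_of_injOn (fun x => l.idxOf x)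
        · intro x hx
          rcases Finset.mem_inter.1 hx with ⟨hxS, hxI⟩
          have hxl : x ∈ l := (Finset.mem_sort _).2 hxS
          have hidx : l.idxOf x < l.length := List.idxOf_lt_length_iff.2 hxl
          rw [Finset.mem_coe, Finset.mem_range]
          by_contra hge
          push_neg at hge
          have hge2 : b - 2 ≤ l.idxOf x := hge
          have hnth : nth S (l.idxOf x) = l.getD (l.idxOf x) 0 := by rw [nth, ← hl]
          have : nth S (b-2) ≤ l.getD (l.idxOf x) 0 := by
            have := nth_gap S (b-2) (l.idxOf x) hge2 (by omega : l.idxOf x < S.card)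
            omega
          rw [List.getD_eq_getElem l 0 hidx, List.getElem_idxOf hidx] at this
          have := (Finset.mem_Icc.1 hxI).2
          omega
        · intro x hx y hy hxy
          rcases Finset.mem_inter.1 hx with ⟨hxS, _⟩
          rcases Finset.mem_inter.1 hy with ⟨hyS, _⟩
          have hxl : x ∈ l := (Finset.mem_sort _).2 hxS
          have hyl : y ∈ l := (Finset.mem_sort _).2 hyS
          exact (List.idxOf_inj hxl).1 hxy
      rw [Finset.card_range] at this
      omega
    have := nth_gap S j (b-2) (by omega) (by omega)
    omega

lemma fiber_card (n k b : ℕ) (hbn : b ≤ n) (T : Finset ℕ) (hT : T ⊆ Finset.Icc 1 b)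
    (hTk : T.card ≤ k) (hTb : b - 1 ≤ T.card) :
    (((Finset.Icc 1 n).powerset.filter
        (fun S => S.card = k ∧ b - 1 ≤ (S ∩ Finset.Icc 1 b).card)).filter
      (fun S => S ∩ Finset.Icc 1 b = T)).card
    = Nat.choose (n - b) (k - T.card) := by
  have h1 : (Finset.powersetCard (k - T.card) (Finset.Icc (b+1) n)).card
      = Nat.choose (n - b) (k - T.card) := by
    rw [Finset.card_powersetCard, Nat.card_Icc]
    congr 1
    omega
  rw [← h1]
  apply Finset.card_bij' (fun S _ => S \ Finset.Icc 1 b) (fun U _ => T ∪ U)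
  · intro S hS
    simp only [Finset.mem_filter, Finset.mem_powerset] at hS
    obtain ⟨⟨hSsub, hSk, _⟩, hST⟩ := hS
    rw [Finset.mem_powersetCard]
    constructor
    · intro x hx
      rw [Finset.mem_sdiff] at hx
      have h2 := Finset.mem_Icc.1 (hSsub hx.1)
      have h3 : ¬ (1 ≤ x ∧ x ≤ b) := fun h => hx.2 (Finset.mem_Icc.2 h)
      rw [Finset.mem_Icc]
      omega
    · have := Finset.card_inter_add_card_sdiff S (Finset.Icc 1 b)
      rw [hST] at this
      omega
  · intro U hU
    rw [Finset.mem_powersetCard] at hU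
    obtain ⟨hUsub, hUcard⟩ := hU
    have hdisj : Disjoint T U := by
      rw [Finset.disjoint_left]
      intro x hxT hxU
      have h2 := Finset.mem_Icc.1 (hT hxT)
      have h3 := Finset.mem_Icc.1 (hUsub hxU)
      omega
    have hUL : ∀ x ∈ U, x ∉ Finset.Icc 1 b := by
      intro x hx hmem
      have h2 := Finset.mem_Icc.1 (hUsub hx)
      have h3 := Finset.mem_Icc.1 hmem
      omega
    have hTL : (T ∪ U) ∩ Finset.Icc 1 b = T := by
      ext x
      simp only [Finset.mem_inter, Finset.mem_union]
      constructor
      · rintro ⟨hx1 | hx2, hxL⟩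
        · exact hx1
        · exact absurd hxL (hUL x hx2)
      · intro hx
        exact ⟨Or.inl hx, hT hx⟩
    simp only [Finset.mem_filter, Finset.mem_powerset]
    refine ⟨⟨?_, ?_, ?_⟩, hTL⟩
    · intro x hx
      rcases Finset.mem_union.1 hx with h | h
      · have := Finset.mem_Icc.1 (hT h); rw [Finset.mem_Icc]; omega
      · have := Finset.mem_Icc.1 (hUsub h); rw [Finset.mem_Icc]; omega
    · rw [Finset.card_union_of_disjoint hdisj, hUcard]
      omega
    · rw [hTL]; exact hTb
  · intro S hS
    simp only [Finset.mem_filter, Finset.mem_powerset] at hS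
    obtain ⟨⟨hSsub, hSk, _⟩, hST⟩ := hS
    rw [← hST]
    ext x
    simp only [Finset.mem_union, Finset.mem_inter, Finset.mem_sdiff]
    constructor
    · rintro (⟨h1, _⟩ | ⟨h1, _⟩) <;> exact h1
    · intro hx
      by_cases hxL : x ∈ Finset.Icc 1 b
      · exact Or.inl ⟨hx, hxL⟩
      · exact Or.inr ⟨hx, hxL⟩
  · intro U hU
    rw [Finset.mem_powersetCard] at hU
    ext x
    simp only [Finset.mem_sdiff, Finset.mem_union]
    constructor
    · rintro ⟨h1 | h1, h2⟩
      · exact absurd (hT h1) h2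
      · exact h1
    · intro hx
      have h2 := Finset.mem_Icc.1 (hU.1 hx)
      refine ⟨Or.inr hx, fun hmem => ?_⟩
      have := Finset.mem_Icc.1 hmem
      omega

/-- |F([2,b])| = b·C(n-b, k-b+1) + C(n-b, k-b): the number of k-subsets S of [n]
with s_j ≤ j+1 for all j ≤ b-1 (0-based: nth S j ≤ j+2 for j < b-1).
Here C(n-b, k-b) is written as C(n-b, n-k), which equals it by symmetry
(and is 0 when b = k+1, matching C(n-b, -1) = 0). -/
theorem stmt_12 (n k b : ℕ) (hn : 2 * k ≤ n) (hk : 2 ≤ k)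
    (hb : 2 ≤ b) (hbk : b ≤ k + 1) :
    ((Finset.Icc 1 n).powerset.filter
      (fun S => S.card = k ∧ ∀ j < b - 1, nth S j ≤ j + 2)).card
    = b * Nat.choose (n - b) (k + 1 - b) + Nat.choose (n - b) (n - k) := by
  have hbn : b ≤ n := by omega
  have hkn : k ≤ n := by omega
  set L := Finset.Icc 1 b with hL
  have hLcard : L.card = b := by rw [hL, Nat.card_Icc]; omega
  -- Step 1: rewrite the condition
  have hrw : ((Finset.Icc 1 n).powerset.filter
      (fun S => S.card = k ∧ ∀ j < b - 1, nth S j ≤ j + 2))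
      = ((Finset.Icc 1 n).powerset.filter
      (fun S => S.card = k ∧ b - 1 ≤ (S ∩ L).card)) := by
    apply Finset.filter_congr
    intro S hS
    rw [Finset.mem_powerset] at hS
    constructor
    · rintro ⟨hc, hcond⟩
      exact ⟨hc, (cond_iff n k b S hS hc hb (by omega)).1 hcond⟩
    · rintro ⟨hc, hcond⟩
      exact ⟨hc, (cond_iff n k b S hS hc hb (by omega)).2 hcond⟩
  rw [hrw]
  set F := ((Finset.Icc 1 n).powerset.filter
      (fun S => S.card = k ∧ b - 1 ≤ (S ∩ L).card)) with hF
  set P : Finset (Finset ℕ) := insert L (L.image fun m => L.erase m) with hP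
  have hmap : ∀ S ∈ F, S ∩ L ∈ P := by
    intro S hS
    simp only [hF, Finset.mem_filter, Finset.mem_powerset] at hS
    obtain ⟨hSsub, hSk, hScard⟩ := hS
    by_cases heq : S ∩ L = L
    · rw [heq, hP]; exact Finset.mem_insert_self _ _
    · have hsub : S ∩ L ⊆ L := Finset.inter_subset_right
      have : ∃ m ∈ L, m ∉ S ∩ L := by
        by_contra hcon
        push_neg at hcon
        exact heq (Finset.Subset.antisymm hsub hcon)
      obtain ⟨m, hmL, hmn⟩ := this
      have h1 : S ∩ L ⊆ L.erase m := by
        intro x hx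
        rw [Finset.mem_erase]
        exact ⟨fun h => hmn (h ▸ hx), hsub hx⟩
      have h2 : (L.erase m).card = b - 1 := by
        rw [Finset.card_erase_of_mem hmL, hLcard]
      have h3 : S ∩ L = L.erase m :=
        Finset.eq_of_subset_of_card_le h1 (by omega)
      rw [hP, Finset.mem_insert]
      exact Or.inr (Finset.mem_image.2 ⟨m, hmL, h3.symm⟩)
  rw [Finset.card_eq_sum_card_fiberwise hmap]
  have hLnotmem : L ∉ L.image fun m => L.erase m := by
    intro hmem
    obtain ⟨m, hmL, hme⟩ := Finset.mem_image.1 hmem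
    have := Finset.card_erase_of_mem hmL
    rw [hme, hLcard] at this
    omega
  rw [hP, Finset.sum_insert hLnotmem]
  have hsum2 : ∑ T ∈ L.image (fun m => L.erase m),
      (F.filter fun S => S ∩ L = T).card = b * Nat.choose (n - b) (k + 1 - b) := by
    rw [Finset.sum_image]
    · have : ∀ m ∈ L, (F.filter fun S => S ∩ L = L.erase m).card
          = Nat.choose (n - b) (k + 1 - b) := by
        intro m hmL
        have hcard : (L.erase m).card = b - 1 := by
          rw [Finset.card_erase_of_mem hmL, hLcard]
        have := fiber_card n k b hbn (L.erase m) (Finset.erase_subset _ _)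
          (by omega) (by omega)
        rw [hF, this, hcard]
        congr 1
        omega
      rw [Finset.sum_congr rfl this, Finset.sum_const, hLcard, smul_eq_mul]
    · intro m hm m' hm' heq
      by_contra hne
      have : m ∈ L.erase m' := Finset.mem_erase.2 ⟨hne, hm⟩
      rw [← show L.erase m = L.erase m' from heq] at this
      exact (Finset.mem_erase.1 this).1 rfl
  rw [hsum2]
  have hfib : (F.filter fun S => S ∩ L = L).card = Nat.choose (n - b) (n - k) := by
    rcases Nat.lt_or_ge k b with hlt | hge
    · -- b = k + 1 : fiber is empty and choose is 0
      have hbk1 : b = k + 1 := by omega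
      have hempty : (F.filter fun S => S ∩ L = L) = ∅ := by
        rw [Finset.filter_eq_empty_iff]
        intro S hS
        simp only [hF, Finset.mem_filter, Finset.mem_powerset] at hS
        intro heq
        have : L ⊆ S := fun x hx => (Finset.mem_inter.1 (heq ▸ hx)).1
        have := Finset.card_le_card this
        rw [hLcard, hS.2.1] at this
        omega
      rw [hempty, Finset.card_empty, Nat.choose_eq_zero_of_lt (by omega)]
    · -- b ≤ k
      have h5 := fiber_card n k b hbn L (fun x hx => hx) (by omega) (by omega)
      rw [hLcard] at h5
      rw [hF, h5]
      have h6 : n - k = (n - b) - (k - b) := by omega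
      rw [h6, Nat.choose_symm (by omega)]
  rw [hfib]
  omega
end
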